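/- Let v : ℝ^ℓ → [1,∞) be continuous and let (g_n) be a sequence of continuously differentiable functions ℝ^ℓ → ℝ with sup_n ‖g_n‖_{v,1} < ∞. Suppose g : ℝ^ℓ → ℝ and ζ : ℝ^ℓ → ℝ^ℓ are continuous and that for every x ∈ ℝ^ℓ, g_n(x) → g(x) and ∇g_n(x) → ζ(x) as n → ∞. Then g is differentiable with ∇g = ζ, and g ∈ L_v^1. -/

import Mathlib

open Filter intervalIntegral

noncomputable section

/-- Partial derivative `∂ᵢ f` of a function on `ℝ^ℓ`. -/
noncomputable def pd {ℓ : ℕ} (i : Fin ℓ) (f : (Fin ℓ → ℝ) → ℝ) (x : Fin ℓ → ℝ) : ℝ :=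
  fderiv ℝ f x (Pi.single i 1)

/-- Membership in the weighted Sobolev space `L_w^1`. -/
def MemLw1 {ℓ : ℕ} (w f : (Fin ℓ → ℝ) → ℝ) : Prop :=
  ContDiff ℝ 1 f ∧ (∃ M : ℝ, ∀ x, |f x| ≤ M * w x) ∧
    ∀ i : Fin ℓ, ∃ M : ℝ, ∀ x, |pd i f x| ≤ M * w x

lemma fderiv_apply_eq_sum {ℓ : ℕ} (f : (Fin ℓ → ℝ) → ℝ) (y h : Fin ℓ → ℝ) :
    fderiv ℝ f y h = ∑ i, h i * pd i f y := by
  have : h = ∑ i, h i • (Pi.single i 1 : Fin ℓ → ℝ) := by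
    ext j
    simp [Finset.sum_apply, Pi.single_apply]
  conv_lhs => rw [this]
  rw [map_sum]
  simp [pd, mul_comm]

lemma key_int {ℓ : ℕ} (f : (Fin ℓ → ℝ) → ℝ) (hf : ContDiff ℝ 1 f) (x h : Fin ℓ → ℝ) :
    f (x + h) - f x = ∫ t in (0:ℝ)..1, ∑ i, h i * pd i f (x + t • h) := by
  have hcont : Continuous fun t : ℝ => (fderiv ℝ f (x + t • h)) h := by
    have h1 : Continuous (fderiv ℝ f) := hf.continuous_fderiv one_ne_zero
    exact ((h1.comp (by continuity)).clm_apply continuous_const)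
  have hderiv : ∀ t ∈ Set.uIcc (0:ℝ) 1,
      HasDerivAt (fun t : ℝ => f (x + t • h)) ((fderiv ℝ f (x + t • h)) h) t := by
    intro t _
    have hc : HasDerivAt (fun t : ℝ => x + t • h) h t := by
      simpa using ((hasDerivAt_id t).smul_const h).const_add x
    exact ((hf.differentiable one_ne_zero (x + t • h)).hasFDerivAt).comp_hasDerivAt t hc
  have := intervalIntegral.integral_eq_sub_of_hasDerivAt hderiv
    (hcont.intervalIntegrable 0 1)
  simp only [one_smul, zero_smul, add_zero] at this
  rw [← this]
  congr 1
  funext t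
  exact fderiv_apply_eq_sum f (x + t • h) h

lemma lim_int {ℓ : ℕ} (v : (Fin ℓ → ℝ) → ℝ) (hv_cont : Continuous v)
    (g : ℕ → (Fin ℓ → ℝ) → ℝ) (hg_smooth : ∀ n, ContDiff ℝ 1 (g n))
    (M : ℝ) (hM : 0 ≤ M)
    (hpd : ∀ n (i : Fin ℓ) x, |pd i (g n) x| ≤ M * v x)
    (glim : (Fin ℓ → ℝ) → ℝ) (ζ : (Fin ℓ → ℝ) → Fin ℓ → ℝ)
    (hconv : ∀ x, Tendsto (fun n => g n x) atTop (nhds (glim x)))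
    (hconv' : ∀ x (i : Fin ℓ),
      Tendsto (fun n => pd i (g n) x) atTop (nhds (ζ x i)))
    (x h : Fin ℓ → ℝ) :
    glim (x + h) - glim x = ∫ t in (0:ℝ)..1, ∑ i, h i * ζ (x + t • h) i := by
  -- bound on v over the segment
  obtain ⟨K, hK⟩ : ∃ K, ∀ t ∈ Set.Icc (0:ℝ) 1, ‖v (x + t • h)‖ ≤ K :=
    (isCompact_Icc).exists_bound_of_continuousOn
      ((hv_cont.comp (by continuity)).continuousOn)
  set C : ℝ := (∑ i, |h i|) * (M * K) with hC
  have hmeas : ∀ n : ℕ, Continuous fun t : ℝ => ∑ i, h i * pd i (g n) (x + t • h) := by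
    intro n
    apply continuous_finset_sum
    intro i _
    have h1 : Continuous (fderiv ℝ (g n)) := (hg_smooth n).continuous_fderiv one_ne_zero
    exact continuous_const.mul (((h1.comp (by continuity)).clm_apply continuous_const))
  have hbd : ∀ n : ℕ, ∀ t ∈ Set.Icc (0:ℝ) 1,
      ‖∑ i, h i * pd i (g n) (x + t • h)‖ ≤ C := by
    intro n t ht
    calc ‖∑ i, h i * pd i (g n) (x + t • h)‖
        ≤ ∑ i, ‖h i * pd i (g n) (x + t • h)‖ := norm_sum_le _ _
      _ ≤ ∑ i, |h i| * (M * K) := by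
          apply Finset.sum_le_sum
          intro i _
          rw [norm_mul]
          apply mul_le_mul_of_nonneg_left _ (abs_nonneg _)
          calc ‖pd i (g n) (x + t • h)‖ ≤ M * v (x + t • h) := hpd n i _
            _ ≤ M * K := by
                have := hK t ht
                have hv' : v (x + t • h) ≤ K := le_trans (le_abs_self _) this
                exact mul_le_mul_of_nonneg_left hv' hM
      _ = C := by rw [hC, Finset.sum_mul]
  have htend : Tendsto (fun n => ∫ t in (0:ℝ)..1, ∑ i, h i * pd i (g n) (x + t • h))
      atTop (nhds (∫ t in (0:ℝ)..1, ∑ i, h i * ζ (x + t • h) i)) := by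
    apply intervalIntegral.tendsto_integral_filter_of_dominated_convergence
      (fun _ => C)
    · exact Eventually.of_forall fun n =>
        ((hmeas n).aestronglyMeasurable)
    · apply Eventually.of_forall
      intro n
      apply MeasureTheory.ae_of_all
      intro t ht
      have ht' : t ∈ Set.Icc (0:ℝ) 1 := by
        rw [Set.uIoc_of_le (by norm_num : (0:ℝ) ≤ 1)] at ht
        exact ⟨le_of_lt ht.1, ht.2⟩
      exact hbd n t ht'
    · exact intervalIntegrable_const
    · apply MeasureTheory.ae_of_all
      intro t _
      apply tendsto_finset_sum
      intro i _
      exact (hconv' (x + t • h) i).const_mul _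
  have htend2 : Tendsto (fun n => g n (x + h) - g n x) atTop
      (nhds (glim (x + h) - glim x)) := (hconv (x + h)).sub (hconv x)
  have heq : (fun n => g n (x + h) - g n x)
      = fun n => ∫ t in (0:ℝ)..1, ∑ i, h i * pd i (g n) (x + t • h) := by
    funext n; exact key_int (g n) (hg_smooth n) x h
  rw [heq] at htend2
  exact tendsto_nhds_unique htend2 htend

/-- Lemma 3.6 / `t:nablaPQx1`: if `C¹` functions `gₙ` have
uniformly bounded `‖·‖_{v,1}`-norms, `gₙ → g` pointwise, `∇gₙ → ζ` pointwise,
and `g, ζ` are continuous, then `g` is differentiable with `∇g = ζ` and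
`g ∈ L_v^1`. -/
theorem stmt11 {ℓ : ℕ} (hℓ : 1 ≤ ℓ) (v : (Fin ℓ → ℝ) → ℝ)
    (hv_cont : Continuous v) (hv_one : ∀ x, 1 ≤ v x)
    (g : ℕ → (Fin ℓ → ℝ) → ℝ) (hg_smooth : ∀ n, ContDiff ℝ 1 (g n))
    (hg_bdd : ∃ M : ℝ, ∀ n, (∀ x, |g n x| ≤ M * v x) ∧
      ∀ (i : Fin ℓ) x, |pd i (g n) x| ≤ M * v x)
    (glim : (Fin ℓ → ℝ) → ℝ) (ζ : (Fin ℓ → ℝ) → Fin ℓ → ℝ)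
    (hglim_cont : Continuous glim) (hζ_cont : Continuous ζ)
    (hconv : ∀ x, Tendsto (fun n => g n x) atTop (nhds (glim x)))
    (hconv' : ∀ x (i : Fin ℓ),
      Tendsto (fun n => pd i (g n) x) atTop (nhds (ζ x i))) :
    (∀ x, HasFDerivAt glim
      (∑ i, ζ x i • (ContinuousLinearMap.proj i : (Fin ℓ → ℝ) →L[ℝ] ℝ)) x) ∧
    MemLw1 v glim := by
  obtain ⟨M, hM⟩ := hg_bdd
  have hMnn : 0 ≤ M := by
    have h1 := (hM 0).1 0
    nlinarith [abs_nonneg (g 0 0), hv_one (0 : Fin ℓ → ℝ)]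
  have hpd : ∀ n (i : Fin ℓ) x, |pd i (g n) x| ≤ M * v x := fun n => (hM n).2
  have hint := lim_int v hv_cont g hg_smooth M hMnn hpd glim ζ hconv hconv'
  -- the candidate derivative at x
  set L : (Fin ℓ → ℝ) → (Fin ℓ → ℝ) →L[ℝ] ℝ :=
    fun x => ∑ i, ζ x i • (ContinuousLinearMap.proj i : (Fin ℓ → ℝ) →L[ℝ] ℝ) with hL
  have hLapp : ∀ x h, L x h = ∑ i, h i * ζ x i := by
    intro x h
    simp [hL, ContinuousLinearMap.sum_apply, mul_comm]
  have hmain : ∀ x, HasFDerivAt glim (L x) x := by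
    intro x
    rw [hasFDerivAt_iff_isLittleO_nhds_zero, Asymptotics.isLittleO_iff]
    intro c hc
    -- continuity of ζ at x
    have hζx : ContinuousAt ζ x := hζ_cont.continuousAt
    rw [Metric.continuousAt_iff] at hζx
    obtain ⟨δ, hδpos, hδ⟩ := hζx (c / (ℓ + 1)) (by positivity)
    have hball : Metric.ball (0 : Fin ℓ → ℝ) δ ∈ nhds (0 : Fin ℓ → ℝ) :=
      Metric.ball_mem_nhds 0 hδpos
    filter_upwards [hball] with h hh
    have hhn : ‖h‖ < δ := by simpa using hh
    -- integral representation of the difference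
    have hrep : glim (x + h) - glim x - L x h
        = ∫ t in (0:ℝ)..1, ∑ i, h i * (ζ (x + t • h) i - ζ x i) := by
      have h1 := hint x h
      have hc1 : Continuous fun t : ℝ => ∑ i, h i * ζ (x + t • h) i := by
        apply continuous_finset_sum; intro i _
        exact continuous_const.mul (((continuous_apply i).comp hζ_cont).comp (by continuity))
      have h2 : (∫ t in (0:ℝ)..1, ∑ i, h i * (ζ (x + t • h) i - ζ x i))
          = (∫ t in (0:ℝ)..1, ∑ i, h i * ζ (x + t • h) i)
            - ∫ t in (0:ℝ)..1, ∑ i, h i * ζ x i := by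
        rw [← intervalIntegral.integral_sub (hc1.intervalIntegrable 0 1)
          (intervalIntegrable_const)]
        congr 1; funext t
        rw [← Finset.sum_sub_distrib]
        congr 1; funext i; ring
      rw [h2, ← h1, intervalIntegral.integral_const]
      have : L x h = ∑ i, h i * ζ x i := hLapp x h
      rw [this]; simp
    rw [hrep]
    -- bound the integral
    have hbd : ∀ t ∈ Set.uIoc (0:ℝ) 1,
        ‖∑ i, h i * (ζ (x + t • h) i - ζ x i)‖ ≤ (ℓ * (c / (ℓ + 1))) * ‖h‖ := by
      intro t ht
      rw [Set.uIoc_of_le (by norm_num : (0:ℝ) ≤ 1)] at ht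
      have hdist : dist (x + t • h) x < δ := by
        rw [dist_eq_norm]
        have : x + t • h - x = t • h := by abel
        rw [this, norm_smul]
        calc ‖t‖ * ‖h‖ ≤ 1 * ‖h‖ := by
              apply mul_le_mul_of_nonneg_right _ (norm_nonneg _)
              rw [Real.norm_eq_abs, abs_of_pos ht.1]; exact ht.2
          _ < δ := by simpa using hhn
      have hζd := hδ hdist
      calc ‖∑ i, h i * (ζ (x + t • h) i - ζ x i)‖
          ≤ ∑ i, ‖h i * (ζ (x + t • h) i - ζ x i)‖ := norm_sum_le _ _
        _ ≤ ∑ i : Fin ℓ, ‖h‖ * (c / (ℓ + 1)) := by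
            apply Finset.sum_le_sum
            intro i _
            rw [norm_mul]
            apply mul_le_mul (norm_le_pi_norm h i) _ (norm_nonneg _) (norm_nonneg _)
            have : dist (ζ (x + t • h) i) (ζ x i) ≤ dist (ζ (x + t • h)) (ζ x) :=
              dist_le_pi_dist _ _ i
            rw [Real.dist_eq] at this
            exact le_of_lt (lt_of_le_of_lt this hζd)
        _ = (ℓ * (c / (ℓ + 1))) * ‖h‖ := by
            rw [Finset.sum_const, Finset.card_univ, Fintype.card_fin]
            push_cast; ring
    have := intervalIntegral.norm_integral_le_of_norm_le_const hbd
    simp only [sub_zero, abs_one, mul_one] at this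
    calc ‖∫ t in (0:ℝ)..1, ∑ i, h i * (ζ (x + t • h) i - ζ x i)‖
        ≤ (ℓ * (c / (ℓ + 1))) * ‖h‖ := this
      _ ≤ c * ‖h‖ := by
          apply mul_le_mul_of_nonneg_right _ (norm_nonneg _)
          calc (ℓ : ℝ) * (c / (ℓ + 1)) ≤ (ℓ + 1) * (c / (ℓ + 1)) := by
                apply mul_le_mul_of_nonneg_right (by linarith) (by positivity)
            _ = c := by field_simp
  refine ⟨hmain, ?_, ⟨M, ?_⟩, fun i => ⟨M, fun x => ?_⟩⟩
  · -- ContDiff ℝ 1 glim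
    rw [contDiff_one_iff_fderiv]
    have hfd : ∀ x, fderiv ℝ glim x = L x := fun x => (hmain x).fderiv
    constructor
    · exact fun x => (hmain x).differentiableAt
    · have : Continuous L := by
        apply continuous_finset_sum
        intro i _
        exact ((continuous_apply i).comp hζ_cont).smul continuous_const
      exact this.congr fun x => (hfd x).symm
  · intro x
    have : Tendsto (fun n => |g n x|) atTop (nhds |glim x|) := (hconv x).abs
    exact le_of_tendsto this (Eventually.of_forall fun n => (hM n).1 x)
  · have hpdg : pd i glim x = ζ x i := by
      rw [pd, (hmain x).fderiv, hLapp]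
      simp [Pi.single_apply]
    rw [hpdg]
    have : Tendsto (fun n => |pd i (g n) x|) atTop (nhds |ζ x i|) := (hconv' x i).abs
    exact le_of_tendsto this (Eventually.of_forall fun n => hpd n i x)

end
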